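/- For all real numbers α, β, γ, δ there exist ε₀ > 0, k₀ > 0 and C > 0 such that for every ε ∈ (0, ε₀) and every real k₊ with |k₊| ≤ k₀ there exist real numbers r₀ > 0 and r₁ satisfying, with ω₀ = (1 + ε²k₊)/(2ε), P₀ = α + β r₀² + ε γ r₀ r₁ and Q₀ = −1 + r₀² + ε δ r₀ r₁, the two relations ω₀ − 1/(2ε) − ε³ P₀ = r₁/r₀ and (r₁/r₀)² = −ε² Q₀, together with the estimates |r₀² − (1 − k₊²/4)| ≤ C ε² (|k₊| + ε²) and |r₁ − ε r₀ k₊ / 2| ≤ C ε³. -/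

import Mathlib

set_option maxHeartbeats 1600000 in
/-- Existence of the amplitudes `(r₀, r₁)` of the rotating-wave periodic solutions
of the truncated 1:1 resonance system, with the asymptotic estimates
`r₀² = 1 − k₊²/4 + O(ε²(|k₊| + ε²))` and `r₁ = ε r₀ k₊/2 + O(ε³)`. -/
theorem rotating_wave_amplitudes_exist (α β γ δ : ℝ) :
    ∃ ε₀ > (0 : ℝ), ∃ k₀ > (0 : ℝ), ∃ C > (0 : ℝ),
      ∀ ε ∈ Set.Ioo (0 : ℝ) ε₀, ∀ kp : ℝ, |kp| ≤ k₀ →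
        ∃ r₀ r₁ : ℝ, 0 < r₀ ∧
          ((1 + ε ^ 2 * kp) / (2 * ε)) - 1 / (2 * ε)
              - ε ^ 3 * (α + β * r₀ ^ 2 + ε * γ * r₀ * r₁) = r₁ / r₀ ∧
          (r₁ / r₀) ^ 2 = -ε ^ 2 * (-1 + r₀ ^ 2 + ε * δ * r₀ * r₁) ∧
          |r₀ ^ 2 - (1 - kp ^ 2 / 4)| ≤ C * ε ^ 2 * (|kp| + ε ^ 2) ∧
          |r₁ - ε * r₀ * kp / 2| ≤ C * ε ^ 3 := by
  obtain ⟨A, hAdef⟩ : ∃ A : ℝ, A = |α| + 2*|β| + 2*|γ| + 1 := ⟨_, rfl⟩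
  have hA1 : (1:ℝ) ≤ A := by
    rw [hAdef]; nlinarith [abs_nonneg α, abs_nonneg β, abs_nonneg γ]
  refine ⟨1/(8*(A+|δ|+1)), by positivity, 1/2, by norm_num,
    2*(A + A^2 + |δ| * (1+A)) + 2*A, by nlinarith [abs_nonneg δ, sq_nonneg A], ?_⟩
  intro ε hε kp hkp
  obtain ⟨hε0, hεlt⟩ := hε
  have hδ0 : (0:ℝ) ≤ |δ| := abs_nonneg δ
  have hX : (0:ℝ) < 8*(A+|δ|+1) := by positivity
  have hεX : ε*(8*(A+|δ|+1)) < 1 := (lt_div_iff₀ hX).mp hεlt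
  have hε1 : ε ≤ 1 := by nlinarith
  have hAε : A*ε ≤ 1/8 := by nlinarith
  have hδε : |δ| * ε ≤ 1/8 := by nlinarith
  have hAε2 : A*ε^2 ≤ 1/8 := by nlinarith
  have hδε2 : |δ| * ε^2 ≤ 1/8 := by nlinarith
  have hεne : ε ≠ 0 := ne_of_gt hε0
  have hε3 : (0:ℝ) < ε^3 := pow_pos hε0 3
  have hε2 : (0:ℝ) < ε^2 := pow_pos hε0 2
  have hkpa := abs_le.mp hkp
  -- the interval for s
  obtain ⟨a, hadef⟩ : ∃ a : ℝ, a = ε*kp/2 - A*ε^3 := ⟨_, rfl⟩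
  obtain ⟨b, hbdef⟩ : ∃ b : ℝ, b = ε*kp/2 + A*ε^3 := ⟨_, rfl⟩
  have hab : a ≤ b := by rw [hadef, hbdef]; nlinarith
  -- basic bounds on the interval
  have hsbound : ∀ s ∈ Set.Icc a b, |s| ≤ ε/2 := by
    intro s hs
    obtain ⟨h1, h2⟩ := hs
    rw [hadef] at h1; rw [hbdef] at h2
    rw [abs_le]
    constructor <;> nlinarith
  have hεδs : ∀ s ∈ Set.Icc a b, |ε*δ*s| ≤ 1/16 := by
    intro s hs
    have h1 := hsbound s hs
    have heq : |ε*δ*s| = ε * |δ| * |s| := by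
      rw [abs_mul, abs_mul, abs_of_pos hε0]
    rw [heq]
    have hnn : 0 ≤ ε * |δ| := by positivity
    nlinarith [mul_le_mul_of_nonneg_left h1 hnn]
  have hDlow : ∀ s ∈ Set.Icc a b, (1:ℝ)/2 ≤ 1 + ε*δ*s := by
    intro s hs
    linarith [(abs_le.mp (hεδs s hs)).1]
  have hDhigh : ∀ s ∈ Set.Icc a b, 1 + ε*δ*s ≤ (3:ℝ)/2 := by
    intro s hs
    linarith [(abs_le.mp (hεδs s hs)).2]
  have hDne : ∀ s ∈ Set.Icc a b, 1 + ε*δ*s ≠ 0 := fun s hs => by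
    have := hDlow s hs; linarith
  -- R bounds
  have hNumlow : ∀ s ∈ Set.Icc a b, (3:ℝ)/4 ≤ 1 - s^2/ε^2 := by
    intro s hs
    have h1 := abs_le.mp (hsbound s hs)
    have : s^2/ε^2 ≤ 1/4 := by
      rw [div_le_iff₀ hε2]; nlinarith
    linarith
  have hNumhigh : ∀ s ∈ Set.Icc a b, 1 - s^2/ε^2 ≤ 1 := by
    intro s hs
    have : 0 ≤ s^2/ε^2 := by positivity
    linarith
  have hRlow : ∀ s ∈ Set.Icc a b, (1:ℝ)/2 ≤ (1 - s^2/ε^2)/(1 + ε*δ*s) := by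
    intro s hs
    have h1 := hDlow s hs
    have h2 := hDhigh s hs
    have h3 := hNumlow s hs
    rw [le_div_iff₀ (by linarith)]
    nlinarith
  have hRhigh : ∀ s ∈ Set.Icc a b, (1 - s^2/ε^2)/(1 + ε*δ*s) ≤ 2 := by
    intro s hs
    have h1 := hDlow s hs
    have h3 := hNumhigh s hs
    rw [div_le_iff₀ (by linarith)]
    nlinarith
  -- P bound
  have hPbound : ∀ s ∈ Set.Icc a b,
      |α + β*((1 - s^2/ε^2)/(1 + ε*δ*s)) + ε*γ*((1 - s^2/ε^2)/(1 + ε*δ*s))*s| ≤ A - 1 := by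
    intro s hs
    have h1 := hRlow s hs
    have h2 := hRhigh s hs
    have h3 := abs_le.mp (hsbound s hs)
    set R := (1 - s^2/ε^2)/(1 + ε*δ*s) with hR
    have hβ : |β*R| ≤ 2*|β| := by
      rw [abs_mul]
      have : |R| ≤ 2 := abs_le.mpr ⟨by linarith, h2⟩
      nlinarith [abs_nonneg β]
    have hγ : |ε*γ*R*s| ≤ 2*|γ| := by
      rw [abs_mul, abs_mul, abs_mul, abs_of_pos hε0]
      have hRa : |R| ≤ 2 := abs_le.mpr ⟨by linarith, h2⟩
      have hsa : |s| ≤ ε/2 := abs_le.mpr h3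
      have step : ε * |γ| * |R| * |s| ≤ ε * |γ| * 2 * (ε/2) := by
        gcongr <;> positivity
      have : ε * |γ| * 2 * (ε/2) = |γ| * ε^2 := by ring
      nlinarith [abs_nonneg γ]
    calc |α + β*R + ε*γ*R*s| ≤ |α| + |β*R| + |ε*γ*R*s| := by
          exact (abs_add_le _ _).trans (by gcongr; exact abs_add_le _ _)
      _ ≤ |α| + 2*|β| + 2*|γ| := by linarith
      _ = A - 1 := by rw [hAdef]; ring
  -- the function F
  obtain ⟨F, hFval⟩ : ∃ F : ℝ → ℝ, ∀ s, F s = ε*kp/2 - ε^3*(α + β*((1 - s^2/ε^2)/(1 + ε*δ*s))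
      + ε*γ*((1 - s^2/ε^2)/(1 + ε*δ*s))*s) - s := ⟨_, fun _ => rfl⟩
  have hcont : ContinuousOn F (Set.Icc a b) := by
    have hRc : ContinuousOn (fun s => (1 - s^2/ε^2)/(1 + ε*δ*s)) (Set.Icc a b) :=
      ContinuousOn.div (by fun_prop) (by fun_prop) hDne
    have hFeq2 : F = fun s => ε*kp/2 - ε^3*(α + β*((1 - s^2/ε^2)/(1 + ε*δ*s))
        + ε*γ*((1 - s^2/ε^2)/(1 + ε*δ*s))*s) - s := funext hFval
    rw [hFeq2]
    exact (continuousOn_const.sub (continuousOn_const.mul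
      ((continuousOn_const.add (continuousOn_const.mul hRc)).add
        ((continuousOn_const.mul hRc).mul continuousOn_id)))).sub continuousOn_id
  have hFa : 0 ≤ F a := by
    have hP := abs_le.mp (hPbound a (Set.left_mem_Icc.mpr hab))
    rw [hFval a]
    nlinarith [hP.1, hP.2, hadef.le, hadef.ge]
  have hFb : F b ≤ 0 := by
    have hP := abs_le.mp (hPbound b (Set.right_mem_Icc.mpr hab))
    rw [hFval b]
    nlinarith [hP.1, hP.2, hbdef.le, hbdef.ge]
  -- IVT
  obtain ⟨s, hsmem, hFs⟩ := intermediate_value_Icc' hab hcont ⟨hFb, hFa⟩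
  rw [hFval s] at hFs
  -- define r₀, r₁
  obtain ⟨R0, hR0def⟩ : ∃ R0 : ℝ, R0 = (1 - s^2/ε^2)/(1 + ε*δ*s) := ⟨_, rfl⟩
  have hR0low : (1:ℝ)/2 ≤ R0 := hR0def ▸ hRlow s hsmem
  have hR0high : R0 ≤ 2 := hR0def ▸ hRhigh s hsmem
  have hR0pos : 0 < R0 := by linarith
  obtain ⟨r₀, hr0def⟩ : ∃ r : ℝ, r = Real.sqrt R0 := ⟨_, rfl⟩
  have hr0pos : 0 < r₀ := hr0def ▸ Real.sqrt_pos.mpr hR0pos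
  have hr0sq : r₀^2 = R0 := hr0def ▸ Real.sq_sqrt (le_of_lt hR0pos)
  have hr0ne : r₀ ≠ 0 := ne_of_gt hr0pos
  obtain ⟨r₁, hr1def⟩ : ∃ r : ℝ, r = s * r₀ := ⟨_, rfl⟩
  have hr1r0 : r₁ / r₀ = s := by rw [hr1def]; field_simp
  have hr0le : r₀ ≤ 3/2 := by nlinarith
  have hDs : 1 + ε*δ*s ≠ 0 := hDne s hsmem
  have hDslow : (1:ℝ)/2 ≤ 1 + ε*δ*s := hDlow s hsmem
  -- key algebraic identity: R0 * (1 + εδs) * ε² = ε² - s²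
  have hkey : R0 * (1 + ε*δ*s) * ε^2 = ε^2 - s^2 := by
    rw [hR0def, div_mul_cancel₀ _ hDs, sub_mul, div_mul_cancel₀ _ (pow_ne_zero 2 hεne), one_mul]
  have hFeq : ε*kp/2 - ε^3*(α + β*R0 + ε*γ*R0*s) = s := by
    rw [hR0def]; linarith [hFs]
  have hsq : r₀ * r₀ = R0 := by linear_combination hr0sq
  -- bound on s - ε kp/2
  have he : |s - ε*kp/2| ≤ A*ε^3 := by
    obtain ⟨h1, h2⟩ := hsmem
    rw [hadef] at h1; rw [hbdef] at h2
    rw [abs_le]; constructor <;> linarith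
  have hsabs : |s| ≤ ε*|kp|/2 + A*ε^3 := by
    have h1 := abs_le.mp he
    rw [abs_le]
    have p1 : (0:ℝ) ≤ ε * (kp + |kp|) := mul_nonneg hε0.le (by linarith [neg_abs_le kp])
    have p2 : (0:ℝ) ≤ ε * (|kp| - kp) := mul_nonneg hε0.le (by linarith [le_abs_self kp])
    constructor <;> nlinarith [h1.1, h1.2]
  clear hsbound hεδs hDlow hDhigh hDne hNumlow hNumhigh hRlow hRhigh hPbound hcont hFval hFa hFb hFs hsmem hab hεlt hεX hX

  clear F
  refine ⟨r₀, r₁, hr0pos, ?_, ?_, ?_, ?_⟩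
  · -- equation 1
    rw [hr1r0]
    have hhalf : (1 + ε^2*kp)/(2*ε) - 1/(2*ε) = ε*kp/2 := by
      field_simp; ring
    rw [hhalf, hr0sq]
    have hrr : r₀ * r₁ = R0 * s := by rw [hr1def]; linear_combination s*hsq
    linear_combination hFeq + (-(ε^4*γ))*hrr
  · -- equation 2
    rw [hr1r0, hr0sq, hr1def]
    linear_combination hkey + (ε^3*δ*s)*hsq
  · -- estimate 1
    rw [hr0sq]
    have hmain : (R0 - (1 - kp^2/4)) * (1 + ε*δ*s) * ε^2
        = -(ε*kp*(s - ε*kp/2)) - (s - ε*kp/2)^2 - ε^3*δ*s*(1 - kp^2/4) := by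
      linear_combination hkey
    have hT1 : |1 - kp^2/4| ≤ 1 := by
      rw [abs_le]; constructor <;> nlinarith [sq_nonneg kp]
    have h1 : |ε*kp*(s - ε*kp/2)| ≤ A*ε^4*|kp| := by
      rw [abs_mul, abs_mul, abs_of_pos hε0]
      linarith [mul_le_mul_of_nonneg_left he (mul_nonneg hε0.le (abs_nonneg kp))]
    have h2 : |(s - ε*kp/2)^2| ≤ A^2*ε^4*ε^2 := by
      rw [abs_pow]
      linarith [pow_le_pow_left₀ (abs_nonneg (s - ε*kp/2)) he 2]
    have h3 : |ε^3*δ*s*(1 - kp^2/4)| ≤ |δ| * (1+A)*ε^4*(|kp| + ε^2) := by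
      rw [abs_mul, abs_mul, abs_mul, abs_pow, abs_of_pos hε0]
      have hnn3 : (0:ℝ) ≤ ε^3 * |δ| := by positivity
      have t1 : ε^3 * |δ| * |s| * |1 - kp^2/4| ≤ ε^3 * |δ| * |s| * 1 :=
        mul_le_mul_of_nonneg_left hT1 (mul_nonneg hnn3 (abs_nonneg s))
      have t2 : ε^3 * |δ| * |s| ≤ ε^3 * |δ| * (ε*|kp|/2 + A*ε^3) :=
        mul_le_mul_of_nonneg_left hsabs hnn3
      linarith [t1, t2, mul_nonneg (mul_nonneg hδ0 (pow_nonneg hε0.le 4)) (abs_nonneg kp),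
        mul_nonneg (mul_nonneg (mul_nonneg hδ0 (by linarith : (0:ℝ) ≤ A)) (pow_nonneg hε0.le 4)) (abs_nonneg kp),
        mul_nonneg (mul_nonneg hδ0 (pow_nonneg hε0.le 4)) hε2.le]
    have htri : |(R0 - (1 - kp^2/4)) * (1 + ε*δ*s) * ε^2|
        ≤ (A + A^2 + |δ| * (1+A)) * ε^4 * (|kp| + ε^2) := by
      rw [hmain]
      calc |-(ε*kp*(s - ε*kp/2)) - (s - ε*kp/2)^2 - ε^3*δ*s*(1 - kp^2/4)|
          ≤ |ε*kp*(s - ε*kp/2)| + |(s - ε*kp/2)^2| + |ε^3*δ*s*(1 - kp^2/4)| := by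
            have t1 := abs_sub (-(ε*kp*(s - ε*kp/2)) - (s - ε*kp/2)^2) (ε^3*δ*s*(1 - kp^2/4))
            have t2 := abs_sub (-(ε*kp*(s - ε*kp/2))) ((s - ε*kp/2)^2)
            have t3 : |-(ε*kp*(s - ε*kp/2))| = |ε*kp*(s - ε*kp/2)| := abs_neg _
            calc |-(ε*kp*(s - ε*kp/2)) - (s - ε*kp/2)^2 - ε^3*δ*s*(1 - kp^2/4)|
                ≤ |-(ε*kp*(s - ε*kp/2)) - (s - ε*kp/2)^2| + |ε^3*δ*s*(1 - kp^2/4)| :=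
                  abs_sub _ _
              _ ≤ |ε*kp*(s - ε*kp/2)| + |(s - ε*kp/2)^2| + |ε^3*δ*s*(1 - kp^2/4)| := by
                  rw [← t3]; linarith [abs_sub (-(ε*kp*(s - ε*kp/2))) ((s - ε*kp/2)^2)]
        _ ≤ (A + A^2 + |δ| * (1+A)) * ε^4 * (|kp| + ε^2) := by
            linarith [h1, h2, h3,
              mul_nonneg (mul_nonneg (by linarith : (0:ℝ) ≤ A) (pow_nonneg hε0.le 4)) hε2.le,
              mul_nonneg (mul_nonneg (sq_nonneg A) (pow_nonneg hε0.le 4)) (abs_nonneg kp)]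
    have hprod : |R0 - (1 - kp^2/4)| * ((1 + ε*δ*s) * ε^2)
        = |(R0 - (1 - kp^2/4)) * (1 + ε*δ*s) * ε^2| := by
      rw [abs_mul, abs_mul, abs_of_pos (by linarith : (0:ℝ) < 1 + ε*δ*s),
        abs_of_pos hε2]
      ring
    have hXnn : 0 ≤ |R0 - (1 - kp^2/4)| := abs_nonneg _
    have hfinal : |R0 - (1 - kp^2/4)| * ((1 + ε*δ*s) * ε^2)
        ≤ (A + A^2 + |δ| * (1+A)) * ε^4 * (|kp| + ε^2) := hprod ▸ htri
    have g1 : (1/2)*ε^2 ≤ (1 + ε*δ*s)*ε^2 := mul_le_mul_of_nonneg_right hDslow hε2.le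
    have g2 : |R0 - (1 - kp^2/4)| * ((1/2)*ε^2) ≤ (A + A^2 + |δ| * (1+A)) * ε^4 * (|kp| + ε^2) :=
      le_trans (mul_le_mul_of_nonneg_left g1 hXnn) hfinal
    have g3 : |R0 - (1 - kp^2/4)| * ε^2 ≤ (2*(A + A^2 + |δ| * (1+A)) * ε^2 * (|kp| + ε^2)) * ε^2 := by
      linarith [g2]
    have g4 : |R0 - (1 - kp^2/4)| ≤ 2*(A + A^2 + |δ| * (1+A)) * ε^2 * (|kp| + ε^2) :=
      le_of_mul_le_mul_right g3 hε2
    have g5 : (0:ℝ) ≤ 2*A*ε^2*(|kp| + ε^2) := by positivity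
    linarith [g4, g5]
  · -- estimate 2
    have hgoal : r₁ - ε*r₀*kp/2 = r₀ * (s - ε*kp/2) := by rw [hr1def]; ring
    rw [hgoal, abs_mul, abs_of_pos hr0pos]
    calc r₀ * |s - ε*kp/2| ≤ (3/2) * (A*ε^3) :=
          mul_le_mul hr0le he (abs_nonneg _) (by norm_num)
      _ ≤ (2*(A + A^2 + |δ| * (1+A)) + 2*A) * ε^3 := by
          linarith [mul_nonneg (sq_nonneg A) hε3.le,
            mul_nonneg (mul_nonneg hδ0 (by linarith : (0:ℝ) ≤ 1+A)) hε3.le,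
            mul_nonneg (by linarith : (0:ℝ) ≤ A) hε3.le]
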